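/- With the same setting (P monic of degree r, conventions w^r = 1, w^h = 0 outside range, f^{kl}_m as above), the diagonal specialization satisfies Σ_{k,l=0}^{r-1} f^{kl}_m w^{k+l+1-m} λ^{k+l} = m λ^{m-1} P(λ) - λ^m P'(λ), as an identity of polynomials in λ. In particular, evaluating at a root λ_i of P gives Σ_{k,l} f^{kl}_m w^{k+l+1-m} λ_i^{k+l} = -λ_i^m P'(λ_i). -/

import Mathlib

open Finset

private lemma card_filter_interval (r h m : ℕ) (N : ℕ) :
    ((Finset.range N).filter fun k => k + 1 ≤ h + m ∧ h + m ≤ k + r).card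
      = min N (h + m) - (h + m - r) := by
  induction N with
  | zero => simp
  | succ n ih =>
    rw [Finset.range_add_one, Finset.filter_insert]
    split_ifs with hc
    · rw [Finset.card_insert_of_notMem (by simp)]
      omega
    · omega

private lemma sum_ite_interval (r h m N : ℕ) (t : ℝ) :
    (∑ k ∈ Finset.range N, if k + 1 ≤ h + m ∧ h + m ≤ k + r then t else 0)
      = ((min N (h + m) - (h + m - r) : ℕ) : ℝ) * t := by
  rw [← Finset.sum_filter, Finset.sum_const, card_filter_interval, nsmul_eq_mul]

private lemma reindex (r m k : ℕ) (W : ℤ → ℝ) (x : ℝ)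
    (hW0 : ∀ h : ℤ, h < 0 ∨ (r : ℤ) < h → W h = 0) :
    ∑ l ∈ Finset.range r, W ((k : ℤ) + l + 1 - m) * x ^ (k + l)
      = ∑ h ∈ Finset.range (r + 1),
          if k + 1 ≤ h + m ∧ h + m ≤ k + r then W (h : ℤ) * x ^ (h + m - 1) else 0 := by
  have step1 : ∀ l ∈ Finset.range r,
      W ((k : ℤ) + l + 1 - m) * x ^ (k + l)
        = ∑ h ∈ Finset.range (r + 1),
            if h + m = k + l + 1 then W (h : ℤ) * x ^ (k + l) else 0 := by
    intro l _
    by_cases hg : m ≤ k + l + 1 ∧ k + l + 1 - m ≤ r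
    · obtain ⟨h1, h2⟩ := hg
      rw [Finset.sum_eq_single (k + l + 1 - m)]
      · rw [if_pos (by omega)]
        congr 2
        omega
      · intro b _ hb
        exact if_neg (by omega)
      · intro hmem
        exact absurd (Finset.mem_range.2 (by omega)) hmem
    · have hW : W ((k : ℤ) + l + 1 - m) = 0 := hW0 _ (by omega)
      rw [hW, zero_mul]
      symm
      apply Finset.sum_eq_zero
      intro b hb
      simp only [Finset.mem_range] at hb
      exact if_neg (by omega)
  rw [Finset.sum_congr rfl step1, Finset.sum_comm]
  apply Finset.sum_congr rfl
  intro h hh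
  simp only [Finset.mem_range] at hh
  by_cases hg : k + 1 ≤ h + m ∧ h + m ≤ k + r
  · rw [if_pos hg]
    rw [Finset.sum_eq_single (h + m - 1 - k)]
    · rw [if_pos (by omega)]
      congr 2
      omega
    · intro b _ hb
      exact if_neg (by omega)
    · intro hmem
      exact absurd (Finset.mem_range.2 (by omega)) hmem
  · rw [if_neg hg]
    apply Finset.sum_eq_zero
    intro b hb
    simp only [Finset.mem_range] at hb
    exact if_neg (by omega)

private lemma main_identity (r m : ℕ) (hm : m ≤ r) (W : ℤ → ℝ)
    (hW0 : ∀ h : ℤ, h < 0 ∨ (r : ℤ) < h → W h = 0) (x : ℝ) :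
    ∑ k ∈ Finset.range r, ∑ l ∈ Finset.range r,
        (if k < m ∧ l < m then (1 : ℝ) else if m ≤ k ∧ m ≤ l then -1 else 0) *
          W ((k : ℤ) + l + 1 - m) * x ^ (k + l) =
      (m : ℝ) * x ^ (m - 1) * (∑ h ∈ Finset.range (r + 1), W (h : ℤ) * x ^ h) -
        x ^ m * (∑ h ∈ Finset.range (r + 1), (h : ℝ) * W (h : ℤ) * x ^ (h - 1)) := by
  set F : ℕ → ℝ := fun k => ∑ l ∈ Finset.range r, W ((k : ℤ) + l + 1 - m) * x ^ (k + l)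
    with hF
  -- Step 1: split the sign into a difference
  have hsplit :
      ∑ k ∈ Finset.range r, ∑ l ∈ Finset.range r,
          (if k < m ∧ l < m then (1 : ℝ) else if m ≤ k ∧ m ≤ l then -1 else 0) *
            W ((k : ℤ) + l + 1 - m) * x ^ (k + l)
        = 2 * (∑ k ∈ Finset.range m, F k) - ∑ k ∈ Finset.range r, F k := by
    have hite : ∀ k l : ℕ,
        (if k < m ∧ l < m then (1 : ℝ) else if m ≤ k ∧ m ≤ l then -1 else 0)
          = (if k < m then (1 : ℝ) else 0) - (if l < m then (0 : ℝ) else 1) := by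
      intro k l
      split_ifs <;> norm_num <;> omega
    have h1 :
        ∑ k ∈ Finset.range r, ∑ l ∈ Finset.range r,
            (if k < m ∧ l < m then (1 : ℝ) else if m ≤ k ∧ m ≤ l then -1 else 0) *
              W ((k : ℤ) + l + 1 - m) * x ^ (k + l)
          = (∑ k ∈ Finset.range r, ∑ l ∈ Finset.range r,
              (if k < m then (1 : ℝ) else 0) * (W ((k : ℤ) + l + 1 - m) * x ^ (k + l)))
            - ∑ k ∈ Finset.range r, ∑ l ∈ Finset.range r,
              (if l < m then (0 : ℝ) else 1) * (W ((k : ℤ) + l + 1 - m) * x ^ (k + l)) := by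
      rw [← Finset.sum_sub_distrib]
      apply Finset.sum_congr rfl; intro k _
      rw [← Finset.sum_sub_distrib]
      apply Finset.sum_congr rfl; intro l _
      rw [hite]; ring
    have hrangem : (Finset.range r).filter (fun k => k < m) = Finset.range m := by
      ext a; simp only [Finset.mem_filter, Finset.mem_range]; omega
    have h2 :
        ∑ k ∈ Finset.range r, ∑ l ∈ Finset.range r,
            (if k < m then (1 : ℝ) else 0) * (W ((k : ℤ) + l + 1 - m) * x ^ (k + l))
          = ∑ k ∈ Finset.range m, F k := by
      have : ∀ k ∈ Finset.range r,
          ∑ l ∈ Finset.range r,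
              (if k < m then (1 : ℝ) else 0) * (W ((k : ℤ) + l + 1 - m) * x ^ (k + l))
            = if k < m then F k else 0 := by
        intro k _
        by_cases hk : k < m
        · simp [hk, hF]
        · simp [hk]
      rw [Finset.sum_congr rfl this, ← Finset.sum_filter, hrangem]
    have h3 :
        ∑ k ∈ Finset.range r, ∑ l ∈ Finset.range r,
            (if l < m then (0 : ℝ) else 1) * (W ((k : ℤ) + l + 1 - m) * x ^ (k + l))
          = (∑ k ∈ Finset.range r, F k) - ∑ k ∈ Finset.range m, F k := by
      rw [Finset.sum_comm]
      have : ∀ l ∈ Finset.range r,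
          ∑ k ∈ Finset.range r,
              (if l < m then (0 : ℝ) else 1) * (W ((k : ℤ) + l + 1 - m) * x ^ (k + l))
            = F l - (if l < m then F l else 0) := by
        intro l _
        have hFl : F l = ∑ k ∈ Finset.range r, W ((k : ℤ) + l + 1 - m) * x ^ (k + l) := by
          rw [hF]
          apply Finset.sum_congr rfl
          intro k _
          have e1 : (l : ℤ) + k + 1 - m = (k : ℤ) + l + 1 - m := by ring
          rw [e1, Nat.add_comm l k]
        by_cases hl : l < m
        · simp [hl, hFl]
        · simp [hl, hFl]
      rw [Finset.sum_congr rfl this, Finset.sum_sub_distrib, ← Finset.sum_filter, hrangem]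
    rw [h1, h2, h3]
    ring
  rw [hsplit]
  -- Step 2: reindex each F-sum by the support variable h
  have hFsum : ∀ N : ℕ,
      ∑ k ∈ Finset.range N, F k
        = ∑ h ∈ Finset.range (r + 1),
            ((min N (h + m) - (h + m - r) : ℕ) : ℝ) * (W (h : ℤ) * x ^ (h + m - 1)) := by
    intro N
    have : ∀ k ∈ Finset.range N, F k
        = ∑ h ∈ Finset.range (r + 1),
            if k + 1 ≤ h + m ∧ h + m ≤ k + r then W (h : ℤ) * x ^ (h + m - 1) else 0 := by
      intro k _
      exact reindex r m k W x hW0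
    rw [Finset.sum_congr rfl this, Finset.sum_comm]
    apply Finset.sum_congr rfl
    intro h _
    exact sum_ite_interval r h m N _
  rw [hFsum m, hFsum r, Finset.mul_sum, Finset.mul_sum, Finset.mul_sum,
    ← Finset.sum_sub_distrib, ← Finset.sum_sub_distrib]
  apply Finset.sum_congr rfl
  intro h hh
  simp only [Finset.mem_range] at hh
  have hcoef : 2 * ((min m (h + m) - (h + m - r) : ℕ) : ℝ)
        - ((min r (h + m) - (h + m - r) : ℕ) : ℝ) = (m : ℝ) - h := by
    have hz : ((2 * (min m (h + m) - (h + m - r)) : ℕ) : ℤ)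
        - ((min r (h + m) - (h + m - r) : ℕ) : ℤ) = (m : ℤ) - h := by
      rw [Nat.min_eq_left (Nat.le_add_left m h)]
      rcases le_total r (h + m) with hc | hc
      · rw [Nat.min_eq_left hc]; omega
      · rw [Nat.min_eq_right hc]; omega
    exact_mod_cast hz
  have hterm : 2 * (((min m (h + m) - (h + m - r) : ℕ) : ℝ) * (W (h : ℤ) * x ^ (h + m - 1)))
        - ((min r (h + m) - (h + m - r) : ℕ) : ℝ) * (W (h : ℤ) * x ^ (h + m - 1))
      = ((m : ℝ) - h) * (W (h : ℤ) * x ^ (h + m - 1)) := by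
    rw [← hcoef]; ring
  rw [hterm]
  -- Step 3: per-h expansion
  rcases Nat.eq_zero_or_pos m with hm0 | hm1
  · subst hm0
    rcases Nat.eq_zero_or_pos h with hh0 | hh1
    · subst hh0; simp
    · have e1 : h + 0 - 1 = 0 + (h - 1) := by omega
      rw [e1, pow_add]
      push_cast
      ring
  · rcases Nat.eq_zero_or_pos h with hh0 | hh1
    · subst hh0
      rw [show (0:ℕ) + m - 1 = m - 1 from by omega]
      push_cast
      ring
    · have e1 : h + m - 1 = (m - 1) + h := by omega
      have e2 : h + m - 1 = m + (h - 1) := by omega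
      have : ((m : ℝ) - h) * (W (h : ℤ) * x ^ (h + m - 1))
          = (m : ℝ) * (W (h : ℤ) * x ^ (h + m - 1)) - (h : ℝ) * (W (h : ℤ) * x ^ (h + m - 1)) := by
        ring
      rw [this]
      nth_rewrite 1 [e1]
      rw [e2, pow_add, pow_add]
      ring


open Finset in
/-- Diagonal specialization: with `P(λ) = λ^r + Σ_{h<r} w^h λ^h` (conventions
`w^r = 1`, `w^h = 0` outside `{0,…,r}`) and `f^{kl}_m` as usual,
`Σ_{k,l=0}^{r-1} f^{kl}_m w^{k+l+1-m} λ^{k+l} = m λ^{m-1} P(λ) - λ^m P'(λ)` as an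
identity in `λ`; in particular at a root `λ_i` of `P` the sum equals
`-λ_i^m P'(λ_i)`. -/
theorem stmt_12 (r m : ℕ) (hm : m ≤ r) (W : ℤ → ℝ) (hWr : W (r : ℤ) = 1)
    (hW0 : ∀ h : ℤ, h < 0 ∨ (r : ℤ) < h → W h = 0) :
    (∀ x : ℝ,
      ∑ k ∈ Finset.range r, ∑ l ∈ Finset.range r,
          (if k < m ∧ l < m then (1 : ℝ) else if m ≤ k ∧ m ≤ l then -1 else 0) *
            W ((k : ℤ) + l + 1 - m) * x ^ (k + l) =
        (m : ℝ) * x ^ (m - 1) * (∑ h ∈ Finset.range (r + 1), W (h : ℤ) * x ^ h) -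
          x ^ m * (∑ h ∈ Finset.range (r + 1), (h : ℝ) * W (h : ℤ) * x ^ (h - 1))) ∧
    (∀ x : ℝ, (∑ h ∈ Finset.range (r + 1), W (h : ℤ) * x ^ h) = 0 →
      ∑ k ∈ Finset.range r, ∑ l ∈ Finset.range r,
          (if k < m ∧ l < m then (1 : ℝ) else if m ≤ k ∧ m ≤ l then -1 else 0) *
            W ((k : ℤ) + l + 1 - m) * x ^ (k + l) =
        -(x ^ m) * (∑ h ∈ Finset.range (r + 1), (h : ℝ) * W (h : ℤ) * x ^ (h - 1))) := by
  refine ⟨fun x => main_identity r m hm W hW0 x, fun x hx => ?_⟩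
  rw [main_identity r m hm W hW0 x, hx]
  ring
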